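/- Let γ : I → ℝ^n be a C¹ generalized orbit of a convex foliation {C_r}_{r≥0} with nowhere-vanishing derivative (no stationary point). Then γ is strongly self-contracted: sec⁻(τ) ⊆ int N_{Ω(τ)}(γ(τ)) for all τ ∈ I, where Ω(τ) is the convex hull of {γ(t) : t ∈ I, t ≥ τ}. -/

import Mathlib

open Set Metric Filter Topology RealInnerProductSpace

/-- The normal cone of a convex set `K` at a point `u₀`. -/
def normalCone {n : ℕ} (K : Set (EuclideanSpace ℝ (Fin n))) (u₀ : EuclideanSpace ℝ (Fin n)) :
    Set (EuclideanSpace ℝ (Fin n)) :=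
  {v | ∀ u ∈ K, ⟪v, u - u₀⟫ ≤ 0}

/-- The set `sec⁻(τ)` of limits of backward unit secant vectors of the curve `γ` at `τ`. -/
def secMinus {n : ℕ} (I : Set ℝ) (γ : ℝ → EuclideanSpace ℝ (Fin n)) (τ : ℝ) :
    Set (EuclideanSpace ℝ (Fin n)) :=
  {q | ‖q‖ = 1 ∧ ∃ t : ℕ → ℝ, (∀ k, t k ∈ I) ∧ (∀ k, t k < τ) ∧
    Tendsto t atTop (nhds τ) ∧
    Tendsto (fun k => ‖γ (t k) - γ τ‖⁻¹ • (γ (t k) - γ τ)) atTop (nhds q)}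

/-- A curve `γ : I → ℝⁿ` is *strongly self-contracted* if it is continuous, injective, and
for every `τ ∈ I`, `sec⁻(τ)` is contained in the interior of the normal cone at `γ τ` of
the convex hull `Ω(τ)` of the tail `{γ t : t ∈ I, t ≥ τ}`. -/
def StronglySelfContracted {n : ℕ} (I : Set ℝ) (γ : ℝ → EuclideanSpace ℝ (Fin n)) : Prop :=
  ContinuousOn γ I ∧ InjOn γ I ∧
  ∀ τ ∈ I, secMinus I γ τ ⊆
    interior (normalCone (convexHull ℝ (γ '' (I ∩ Ici τ))) (γ τ))

/-- A family `{C r}_{r ≥ 0}` of nonempty compact convex sets is a *convex foliation* of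
`ℝⁿ` if it is strictly nested (`r₁ < r₂ → C r₁ ⊆ int C r₂`) and the boundaries
`∂(C r)`, `r ≥ 0`, cover `ℝⁿ \ int (C 0)`. -/
def IsConvexFoliation {n : ℕ} (C : ℝ → Set (EuclideanSpace ℝ (Fin n))) : Prop :=
  (∀ r, 0 ≤ r → (C r).Nonempty ∧ IsCompact (C r) ∧ Convex ℝ (C r)) ∧
  (∀ r₁ r₂, 0 ≤ r₁ → r₁ < r₂ → C r₁ ⊆ interior (C r₂)) ∧
  (⋃ r ∈ Ici (0 : ℝ), frontier (C r)) = univ \ interior (C 0)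

/-- A continuous curve `γ : I → ℝⁿ` is a *generalized orbit* of the convex foliation
`{C r}` if its image avoids `int (C 0)`, the level function `r(·)` (determined by
`γ(t) ∈ ∂ C (r t)`) is strictly decreasing, and `sec⁻(t) ⊆ N_{C (r t)}(γ t)` for all
`t ∈ I`. -/
def IsGeneralizedOrbit {n : ℕ} (C : ℝ → Set (EuclideanSpace ℝ (Fin n)))
    (I : Set ℝ) (γ : ℝ → EuclideanSpace ℝ (Fin n)) (r : ℝ → ℝ) : Prop :=
  ContinuousOn γ I ∧
  (∀ t ∈ I, γ t ∉ interior (C 0)) ∧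
  (∀ t ∈ I, 0 ≤ r t ∧ γ t ∈ frontier (C (r t))) ∧
  (∀ t₁ ∈ I, ∀ t₂ ∈ I, t₁ < t₂ → r t₂ < r t₁) ∧
  (∀ t ∈ I, secMinus I γ t ⊆ normalCone (C (r t)) (γ t))

/-- If `⟪q, u - u₀⟫ ≤ -ε‖u - u₀‖` uniformly on `K`, then `q` belongs to the interior of the
normal cone of `convexHull ℝ K` at `u₀`. -/
lemma mem_interior_normalCone_of_unif {n : ℕ} {K : Set (EuclideanSpace ℝ (Fin n))}
    {u₀ q : EuclideanSpace ℝ (Fin n)} {ε : ℝ} (hε : 0 < ε)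
    (h : ∀ u ∈ K, ⟪q, u - u₀⟫ ≤ -ε * ‖u - u₀‖) :
    q ∈ interior (normalCone (convexHull ℝ K) u₀) := by
  refine mem_interior.2 ⟨Metric.ball q ε, ?_, Metric.isOpen_ball, Metric.mem_ball_self hε⟩
  intro v hv
  have hvq : ‖v - q‖ ≤ ε := by
    rw [Metric.mem_ball, dist_eq_norm] at hv; exact hv.le
  intro u hu
  have hconv : Convex ℝ {u : EuclideanSpace ℝ (Fin n) | ⟪v, u - u₀⟫ ≤ (0 : ℝ)} := by
    have heq : {u : EuclideanSpace ℝ (Fin n) | ⟪v, u - u₀⟫ ≤ (0 : ℝ)}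
        = {u | ⟪v, u⟫ ≤ ⟪v, u₀⟫} := by
      ext u; simp [inner_sub_right, sub_nonpos]
    rw [heq]
    exact convex_halfSpace_le
      ⟨fun a b => inner_add_right v a b, fun c x => real_inner_smul_right v x c⟩ _
  refine convexHull_min ?_ hconv hu
  intro w hw
  have h1 := h w hw
  have h2 : ⟪v - q, w - u₀⟫ ≤ ‖v - q‖ * ‖w - u₀‖ := real_inner_le_norm _ _
  have h3 : (0 : ℝ) ≤ ‖w - u₀‖ := norm_nonneg _
  have h4 : ⟪v, w - u₀⟫ = ⟪q, w - u₀⟫ + ⟪v - q, w - u₀⟫ := by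
    rw [inner_sub_left]; ring
  have h5 : ‖v - q‖ * ‖w - u₀‖ ≤ ε * ‖w - u₀‖ := mul_le_mul_of_nonneg_right hvq h3
  show ⟪v, w - u₀⟫ ≤ 0
  rw [h4]; nlinarith

/-- Every `C¹` generalized orbit of a convex foliation with nowhere-vanishing derivative
is strongly self-contracted. -/
theorem c1_generalizedOrbit_stronglySelfContracted {n : ℕ}
    (C : ℝ → Set (EuclideanSpace ℝ (Fin n))) (hC : IsConvexFoliation C)
    (T : ENNReal) (hT : 0 < T) (I : Set ℝ)
    (hI : I = {t : ℝ | 0 ≤ t ∧ ENNReal.ofReal t < T})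
    (γ : ℝ → EuclideanSpace ℝ (Fin n)) (r : ℝ → ℝ)
    (hγ : IsGeneralizedOrbit C I γ r)
    (γ' : ℝ → EuclideanSpace ℝ (Fin n))
    (hderiv : ∀ t ∈ I, HasDerivWithinAt γ (γ' t) I t)
    (hC1 : ContinuousOn γ' I)
    (hne : ∀ t ∈ I, γ' t ≠ 0) :
    StronglySelfContracted I γ := by
  obtain ⟨hcont, havoid, hfr, hdec, hsecN⟩ := hγ
  obtain ⟨hCne, hCnest, -⟩ := hC
  have hrpos : ∀ t ∈ I, 0 ≤ r t := fun t ht => (hfr t ht).1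
  have hCclosed : ∀ ρ, 0 ≤ ρ → IsClosed (C ρ) := fun ρ hρ => (hCne ρ hρ).2.1.isClosed
  have hmemC : ∀ t ∈ I, γ t ∈ C (r t) := by
    intro t ht
    exact (hCclosed _ (hrpos t ht)).frontier_subset (hfr t ht).2
  have hnotint : ∀ t ∈ I, γ t ∉ interior (C (r t)) := by
    intro t ht
    exact fun hint => (disjoint_interior_frontier (s := C (r t))).ne_of_mem hint (hfr t ht).2 rfl
  have hnest' : ∀ t₁ ∈ I, ∀ t₂ ∈ I, t₁ < t₂ → γ t₂ ∈ interior (C (r t₁)) := by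
    intro t₁ h₁ t₂ h₂ hlt
    exact hCnest _ _ (hrpos t₂ h₂) (hdec t₁ h₁ t₂ h₂ hlt) (hmemC t₂ h₂)
  have hinj : InjOn γ I := by
    intro a ha b hb hab
    by_contra hne'
    rcases lt_or_gt_of_ne hne' with h | h
    · exact hnotint a ha (hab ▸ hnest' a ha b hb h)
    · exact hnotint b hb (hab ▸ hnest' b hb a ha h)
  refine ⟨hcont, hinj, ?_⟩
  intro τ hτ q hq
  have hq' := hq
  obtain ⟨hq1, t, htI, htlt, httend, htsec⟩ := hq
  have hγ'ne := hne τ hτ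
  have hγ'pos : (0 : ℝ) < ‖γ' τ‖ := norm_pos_iff.2 hγ'ne
  have hslope : Tendsto (slope γ τ) (𝓝[I \ {τ}] τ) (𝓝 (γ' τ)) :=
    hasDerivWithinAt_iff_tendsto_slope.1 (hderiv τ hτ)
  -- identify q as the negative unit tangent vector
  have hmemseq : Tendsto t atTop (𝓝[I \ {τ}] τ) := by
    rw [tendsto_nhdsWithin_iff]
    exact ⟨httend, Filter.Eventually.of_forall fun k => ⟨htI k, (htlt k).ne⟩⟩
  have hslopek : Tendsto (fun k => slope γ τ (t k)) atTop (𝓝 (γ' τ)) := hslope.comp hmemseq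
  have hφcont : ContinuousAt (fun u : EuclideanSpace ℝ (Fin n) => -(‖u‖⁻¹ • u)) (γ' τ) := by
    have : ContinuousAt (fun u : EuclideanSpace ℝ (Fin n) => ‖u‖⁻¹ • u) (γ' τ) :=
      ((continuous_norm.continuousAt).inv₀ (ne_of_gt hγ'pos)).smul continuousAt_id
    exact this.neg
  have hφ : Tendsto (fun k => -(‖slope γ τ (t k)‖⁻¹ • slope γ τ (t k))) atTop
      (𝓝 (-(‖γ' τ‖⁻¹ • γ' τ))) := hφcont.tendsto.comp hslopek
  have heq : ∀ k, -(‖slope γ τ (t k)‖⁻¹ • slope γ τ (t k))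
      = ‖γ (t k) - γ τ‖⁻¹ • (γ (t k) - γ τ) := by
    intro k
    have hc : t k - τ < 0 := sub_neg.2 (htlt k)
    have hcne : t k - τ ≠ 0 := ne_of_lt hc
    rw [slope_def_module, norm_smul, smul_smul, ← neg_smul]
    congr 1
    rw [norm_inv, Real.norm_eq_abs, abs_of_neg hc, mul_inv, inv_inv]
    field_simp
  have hqeq : q = -(‖γ' τ‖⁻¹ • γ' τ) :=
    tendsto_nhds_unique htsec (hφ.congr heq)
  have hinnerq : ⟪q, γ' τ⟫ = -‖γ' τ‖ := by
    rw [hqeq, inner_neg_left, real_inner_smul_left, real_inner_self_eq_norm_mul_norm]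
    field_simp
  have hq_N : ∀ u ∈ C (r τ), ⟪q, u - γ τ⟫ ≤ 0 := hsecN τ hτ hq'
  -- Step 1: near part
  have hstep1 : ∃ δ > 0, ∀ s ∈ I, τ < s → s < τ + δ →
      ⟪q, γ s - γ τ⟫ ≤ -(1/2) * ‖γ s - γ τ‖ := by
    have hmono : 𝓝[I ∩ Ioi τ] τ ≤ 𝓝[I \ {τ}] τ :=
      nhdsWithin_mono τ (fun x hx => ⟨hx.1, ne_of_gt hx.2⟩)
    have hg : ContinuousAt (fun u : EuclideanSpace ℝ (Fin n) => ⟪q, u⟫ / ‖u‖) (γ' τ) :=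
      ((Continuous.inner continuous_const continuous_id).continuousAt).div
        continuous_norm.continuousAt (ne_of_gt hγ'pos)
    have hval : ⟪q, γ' τ⟫ / ‖γ' τ‖ = -1 := by
      rw [hinnerq]; field_simp
    have htend2 : Tendsto (fun s => ⟪q, slope γ τ s⟫ / ‖slope γ τ s‖)
        (𝓝[I ∩ Ioi τ] τ) (𝓝 (-1)) := by
      have := hg.tendsto.comp (hslope.mono_left hmono)
      rwa [hval] at this
    have hev : ∀ᶠ s in 𝓝[I ∩ Ioi τ] τ,
        ⟪q, slope γ τ s⟫ / ‖slope γ τ s‖ < -(1/2) :=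
      htend2.eventually_lt_const (by norm_num)
    rw [(Metric.nhdsWithin_basis_ball).eventually_iff] at hev
    obtain ⟨δ, hδpos, hball⟩ := hev
    refine ⟨δ, hδpos, fun s hsI hτs hsδ => ?_⟩
    have hd : s ∈ Metric.ball τ δ := by
      rw [Metric.mem_ball, Real.dist_eq, abs_of_pos (sub_pos.2 hτs)]; linarith
    have h1 := hball ⟨hd, hsI, hτs⟩
    have hne2 : γ s ≠ γ τ := hinj.ne hsI hτ (ne_of_gt hτs)
    have hdn : 0 < ‖γ s - γ τ‖ := by rwa [norm_pos_iff, sub_ne_zero]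
    have hcpos : 0 < s - τ := sub_pos.2 hτs
    rw [slope_def_module, real_inner_smul_right, norm_smul, norm_inv, Real.norm_eq_abs,
      abs_of_pos hcpos, mul_div_mul_left _ _ (inv_ne_zero (ne_of_gt hcpos))] at h1
    have := (div_lt_iff₀ hdn).1 h1
    linarith
  obtain ⟨δ, hδpos, hδ⟩ := hstep1
  rw [hI] at hτ
  -- Step 2: far part
  have hstep2 : ∃ ε₂ > 0, ∀ s ∈ I, τ + δ ≤ s →
      ⟪q, γ s - γ τ⟫ ≤ -ε₂ * ‖γ s - γ τ‖ := by
    by_cases hfar : ∃ s ∈ I, τ + δ ≤ s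
    · obtain ⟨s₀, hs₀I, hs₀⟩ := hfar
      have hs₀I' := hs₀I
      rw [hI] at hs₀I'
      have hτδI : τ + δ ∈ I := by
        rw [hI]
        exact ⟨by linarith [hτ.1], lt_of_le_of_lt (ENNReal.ofReal_le_ofReal hs₀) hs₀I'.2⟩
      have hτI : τ ∈ I := by rw [hI]; exact hτ
      set ρ := r (τ + δ) with hρ
      have hρ0 : 0 ≤ ρ := hrpos _ hτδI
      have hKsub : C ρ ⊆ interior (C (r τ)) :=
        hCnest ρ (r τ) hρ0 (hdec τ hτI (τ + δ) hτδI (by linarith))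
      have htail : ∀ s ∈ I, τ + δ ≤ s → γ s ∈ C ρ := by
        intro s hsI hs
        rcases eq_or_lt_of_le hs with h | h
        · rw [← h]; exact hmemC _ hτδI
        · exact interior_subset
            (hCnest _ _ (hrpos s hsI) (hdec _ hτδI _ hsI h) (hmemC s hsI))
      have hKcpt : IsCompact (C ρ) := (hCne ρ hρ0).2.1
      have hKne : (C ρ).Nonempty := (hCne ρ hρ0).1
      have hfcont : ContinuousOn (fun u : EuclideanSpace ℝ (Fin n) => ⟪q, u - γ τ⟫) (C ρ) :=
        (Continuous.inner continuous_const (continuous_id.sub continuous_const)).continuousOn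
      obtain ⟨u₀, hu₀K, hu₀max⟩ := hKcpt.exists_isMaxOn hKne hfcont
      have hu₀neg : ⟪q, u₀ - γ τ⟫ < 0 := by
        rcases lt_or_eq_of_le (hq_N u₀ (interior_subset (hKsub hu₀K))) with h | h
        · exact h
        · exfalso
          obtain ⟨η, hη, hball⟩ := Metric.isOpen_iff.1 isOpen_interior _ (hKsub hu₀K)
          have hwmem : u₀ + (η/2) • q ∈ C (r τ) := by
            apply interior_subset; apply hball
            rw [Metric.mem_ball, dist_eq_norm, add_sub_cancel_left, norm_smul,
              Real.norm_eq_abs, abs_of_pos (by linarith), hq1]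
            linarith
          have hw := hq_N _ hwmem
          have : ⟪q, (u₀ + (η/2) • q) - γ τ⟫ = ⟪q, u₀ - γ τ⟫ + (η/2) * (‖q‖ * ‖q‖) := by
            rw [add_sub_right_comm, inner_add_right, real_inner_smul_right,
              real_inner_self_eq_norm_mul_norm]
          rw [this, ← h, hq1] at hw
          linarith
      have hu₀ne : u₀ - γ τ ≠ 0 := by
        intro h0
        rw [h0, inner_zero_right] at hu₀neg
        exact lt_irrefl _ hu₀neg
      obtain ⟨u₁, hu₁K, hu₁max⟩ := hKcpt.exists_isMaxOn hKne
        ((continuous_id.sub continuous_const).norm.continuousOn :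
          ContinuousOn (fun u : EuclideanSpace ℝ (Fin n) => ‖u - γ τ‖) (C ρ))
      set M := ‖u₁ - γ τ‖ with hM
      have hM0 : 0 < M := lt_of_lt_of_le (norm_pos_iff.2 hu₀ne) (hu₁max hu₀K)
      refine ⟨(-⟪q, u₀ - γ τ⟫) / M, div_pos (by linarith) hM0, ?_⟩
      intro s hsI hs
      have hin := htail s hsI hs
      have h1 : ⟪q, γ s - γ τ⟫ ≤ ⟪q, u₀ - γ τ⟫ := hu₀max hin
      have h2 : ‖γ s - γ τ‖ ≤ M := hu₁max hin
      have h3 : (0 : ℝ) ≤ ‖γ s - γ τ‖ := norm_nonneg _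
      have key : (-⟪q, u₀ - γ τ⟫) / M * ‖γ s - γ τ‖ ≤ -⟪q, u₀ - γ τ⟫ := by
        rw [div_mul_eq_mul_div, div_le_iff₀ hM0]
        nlinarith
      linarith
    · exact ⟨1, one_pos, fun s hsI hs => absurd ⟨s, hsI, hs⟩ hfar⟩
  obtain ⟨ε₂, hε₂pos, hε₂⟩ := hstep2
  set ε := min (1/2 : ℝ) ε₂ with hεdef
  have hεpos : 0 < ε := lt_min (by norm_num) hε₂pos
  apply mem_interior_normalCone_of_unif hεpos
  rintro u ⟨s, ⟨hsI, hs⟩, rfl⟩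
  have hs' : τ ≤ s := hs
  have h3 : (0 : ℝ) ≤ ‖γ s - γ τ‖ := norm_nonneg _
  rcases eq_or_lt_of_le hs' with h | h
  · rw [← h, sub_self, inner_zero_right, norm_zero, mul_zero]
  · rcases lt_or_ge s (τ + δ) with h2 | h2
    · have := hδ s hsI h h2
      have hε12 : ε ≤ 1/2 := min_le_left _ _
      nlinarith
    · have := hε₂ s hsI h2
      have hεε₂ : ε ≤ ε₂ := min_le_right _ _
      nlinarith
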